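/- Let n ≥ 1 and let ω = (ω_1,…,ω_n) ∈ {0,…,9}^n satisfy D_n(ω) ≡ 0 (mod 2^n) and ω_1 ∈ {2,4,6,8}. Then there exists k ≥ n with D_n(ω) ≡ 2^k (mod 10^n), i.e., ω ∈ Ω_n. -/

import Mathlib

open scoped Classical

noncomputable def Dn (n : ℕ) (x : Fin n → Fin 10) : ℕ :=
  ∑ j : Fin n, 10 ^ (j : ℕ) * (x j : ℕ)

noncomputable def Omega (n : ℕ) : Finset (Fin n → Fin 10) :=
  Finset.univ.filter (fun x => ∃ k ≥ n, Dn n x % 10 ^ n = 2 ^ k % 10 ^ n)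

lemma five_prime : Nat.Prime 5 := by norm_num

lemma emult_aux (e : ℕ) : emultiplicity 5 (2 ^ (4 * e) - 1) =
    1 + emultiplicity 5 e := by
  have h15 : emultiplicity 5 (16 - 1 : ℕ) = 1 := by
    rw [show (16 - 1 : ℕ) = 15 by norm_num, ← Nat.cast_one (R := ℕ∞),
      emultiplicity_eq_coe]
    constructor <;> norm_num
  have key := Nat.emultiplicity_pow_sub_pow (p := 5) five_prime (by decide)
    (x := 16) (y := 1) (by norm_num) (by norm_num) e
  rw [one_pow, h15] at key
  rw [show (2 : ℕ) ^ (4 * e) = 16 ^ e by rw [pow_mul]; norm_num]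
  exact key

lemma natcast_enat (n : ℕ) (hn : 1 ≤ n) : (n : ℕ∞) = 1 + ((n - 1 : ℕ) : ℕ∞) := by
  rw [← Nat.cast_one (R := ℕ∞), ← Nat.cast_add]
  congr 1
  omega

lemma pow_five_dvd (n : ℕ) (hn : 1 ≤ n) : 5 ^ n ∣ 2 ^ (4 * 5 ^ (n - 1)) - 1 := by
  apply pow_dvd_of_le_emultiplicity
  rw [emult_aux, emultiplicity_pow_self_of_prime (Nat.prime_iff.mp five_prime),
    natcast_enat n hn]

lemma orderOf_two_zmod (n : ℕ) (hn : 1 ≤ n) :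
    orderOf (2 : ZMod (5 ^ n)) = 4 * 5 ^ (n - 1) := by
  haveI : NeZero (5 ^ n) := ⟨by positivity⟩
  have key : ∀ m : ℕ, (2 : ZMod (5 ^ n)) ^ m = 1 ↔ 5 ^ n ∣ 2 ^ m - 1 := by
    intro m
    have h1 : (1 : ℕ) ≤ 2 ^ m := Nat.one_le_two_pow
    rw [← Nat.modEq_iff_dvd' h1]
    constructor
    · intro h
      have : ((2 ^ m : ℕ) : ZMod (5 ^ n)) = ((1 : ℕ) : ZMod (5 ^ n)) := by
        push_cast; simpa using h
      exact ((ZMod.natCast_eq_natCast_iff _ _ _).mp this).symm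
    · intro h
      have := (ZMod.natCast_eq_natCast_iff (1 : ℕ) (2 ^ m) (5 ^ n)).mpr h
      push_cast at this
      exact this.symm
  have hupper : orderOf (2 : ZMod (5 ^ n)) ∣ 4 * 5 ^ (n - 1) :=
    orderOf_dvd_of_pow_eq_one ((key _).mpr (pow_five_dvd n hn))
  -- d ≠ 0 via units
  have hcop2 : Nat.Coprime 2 (5 ^ n) := Nat.Coprime.pow_right n (by norm_num)
  have hucast : ((ZMod.unitOfCoprime 2 hcop2 : (ZMod (5 ^ n))ˣ) : ZMod (5 ^ n))
      = 2 := by rw [ZMod.coe_unitOfCoprime]; push_cast; ring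
  have horder : orderOf (2 : ZMod (5 ^ n)) =
      orderOf (ZMod.unitOfCoprime 2 hcop2) := by
    rw [← hucast, orderOf_units]
  set d := orderOf (2 : ZMod (5 ^ n)) with hd
  have hdne : d ≠ 0 := by
    rw [horder]
    exact (isOfFinOrder_of_finite _).orderOf_pos.ne'
  have hpow : 5 ^ n ∣ 2 ^ d - 1 := (key d).mp (pow_orderOf_eq_one _)
  -- 4 ∣ d
  have h5 : (5 : ℕ) ∣ 2 ^ d - 1 := dvd_trans (dvd_pow_self 5 (by omega)) hpow
  have h4d : 4 ∣ d := by
    have h1 : (1 : ℕ) ≤ 2 ^ d := Nat.one_le_two_pow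
    have hmod : (2 : ZMod 5) ^ d = 1 := by
      have := (ZMod.natCast_eq_natCast_iff (1 : ℕ) (2 ^ d) 5).mpr
        ((Nat.modEq_iff_dvd' h1).mpr h5)
      push_cast at this
      exact this.symm
    have hr : (2 : ZMod 5) ^ (d % 4) = 1 := by
      conv at hmod => rw [← Nat.div_add_mod d 4]
      rw [pow_add, pow_mul, show (2 : ZMod 5) ^ 4 = 1 from by decide,
        one_pow, one_mul] at hmod
      exact hmod
    have h4 : d % 4 < 4 := Nat.mod_lt _ (by norm_num)
    apply Nat.dvd_of_mod_eq_zero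
    set r := d % 4 with hrr
    interval_cases r
    · rfl
    · exact absurd hr (by decide)
    · exact absurd hr (by decide)
    · exact absurd hr (by decide)
  obtain ⟨e, he⟩ := h4d
  have hle : (n : ℕ∞) ≤ emultiplicity 5 (2 ^ (4 * e) - 1) := by
    rw [← he]; exact le_emultiplicity_of_pow_dvd hpow
  rw [emult_aux, natcast_enat n hn] at hle
  have hle' : ((n - 1 : ℕ) : ℕ∞) ≤ emultiplicity 5 e :=
    (ENat.add_le_add_iff_left (by simp)).mp hle
  have hdvd5 : 5 ^ (n - 1) ∣ e := pow_dvd_of_le_emultiplicity hle'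
  refine Nat.dvd_antisymm hupper ?_
  rw [he]
  exact mul_dvd_mul_left 4 hdvd5

theorem mem_Omega_of_mod (n : ℕ) (hn : 1 ≤ n) (ω : Fin n → Fin 10)
    (h2 : Dn n ω % 2 ^ n = 0) (h1 : ((ω ⟨0, hn⟩ : ℕ)) ∈ ({2, 4, 6, 8} : Set ℕ)) :
    ω ∈ Omega n := by
  haveI : NeZero (5 ^ n) := ⟨by positivity⟩
  set D := Dn n ω with hD
  -- D is not divisible by 5
  have hcast : (D : ZMod 5) = ((ω ⟨0, hn⟩ : ℕ) : ZMod 5) := by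
    rw [hD, Dn]
    push_cast
    rw [Finset.sum_eq_single (⟨0, hn⟩ : Fin n)]
    · norm_num
    · intro j _ hj
      have hj' : (j : ℕ) ≠ 0 := by
        intro h; apply hj; ext; simpa using h
      rw [show (10 : ZMod 5) = 0 from by decide, zero_pow hj', zero_mul]
    · simp
  simp only [Set.mem_insert_iff, Set.mem_singleton_iff] at h1
  have hD5 : ¬ (5 ∣ D) := by
    intro hdvd
    have h0 : (D : ZMod 5) = 0 := (ZMod.natCast_eq_zero_iff D 5).mpr hdvd
    rw [hcast] at h0
    rcases h1 with h | h | h | h <;> rw [h] at h0 <;> revert h0 <;> decide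
  have hcop : Nat.Coprime D (5 ^ n) :=
    (((Nat.Prime.coprime_iff_not_dvd five_prime).mpr hD5).symm).pow_right n
  have hcop2 : Nat.Coprime 2 (5 ^ n) := Nat.Coprime.pow_right n (by norm_num)
  set u : (ZMod (5 ^ n))ˣ := ZMod.unitOfCoprime 2 hcop2 with hu
  set v : (ZMod (5 ^ n))ˣ := ZMod.unitOfCoprime D hcop with hv
  have hucast : (u : ZMod (5 ^ n)) = 2 := by
    rw [hu, ZMod.coe_unitOfCoprime]; push_cast; ring
  have horder : orderOf u = 4 * 5 ^ (n - 1) := by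
    rw [← orderOf_units, hucast]
    exact orderOf_two_zmod n hn
  have hcard : Nat.card (Subgroup.zpowers u) = Nat.card (ZMod (5 ^ n))ˣ := by
    rw [Nat.card_zpowers, horder, Nat.card_eq_fintype_card,
      ZMod.card_units_eq_totient,
      show 5 ^ n = 5 ^ (n - 1 + 1) by rw [Nat.sub_add_cancel hn],
      Nat.totient_prime_pow five_prime (Nat.succ_pos _)]
    rw [Nat.succ_sub_one]
    ring
  have htop : Subgroup.zpowers u = ⊤ := Subgroup.eq_top_of_card_eq _ hcard
  have hvmem : v ∈ Subgroup.zpowers u := by rw [htop]; trivial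
  obtain ⟨k0, hk0⟩ := (isOfFinOrder_of_finite u).mem_powers_iff_mem_zpowers.mpr hvmem
  have hk0' : u ^ k0 = v := hk0
  -- (2 : ZMod (5^n))^k0 = D
  have hzmod : ((2 ^ k0 : ℕ) : ZMod (5 ^ n)) = (D : ZMod (5 ^ n)) := by
    have hval : ((u ^ k0 : (ZMod (5 ^ n))ˣ) : ZMod (5 ^ n)) = (v : ZMod (5 ^ n)) := by
      rw [hk0']
    rw [Units.val_pow_eq_pow_val, hucast] at hval
    rw [hv, ZMod.coe_unitOfCoprime] at hval
    push_cast
    exact hval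
  have hmod5 : 2 ^ k0 ≡ D [MOD 5 ^ n] :=
    (ZMod.natCast_eq_natCast_iff _ _ _).mp hzmod
  -- choose k ≥ n
  have hT1 : 1 ≤ 4 * 5 ^ (n - 1) := Nat.one_le_iff_ne_zero.mpr (by positivity)
  set k := k0 + n * (4 * 5 ^ (n - 1)) with hk
  have hkn : n ≤ k := by
    calc n = n * 1 := (mul_one n).symm
    _ ≤ n * (4 * 5 ^ (n - 1)) := Nat.mul_le_mul_left n hT1
    _ ≤ k := Nat.le_add_left _ _
  have hTone : (2 : ZMod (5 ^ n)) ^ (4 * 5 ^ (n - 1)) = 1 := by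
    rw [← orderOf_two_zmod n hn]; exact pow_orderOf_eq_one _
  have hmod5k : 2 ^ k ≡ D [MOD 5 ^ n] := by
    have hcc : ((2 ^ k : ℕ) : ZMod (5 ^ n)) = ((2 ^ k0 : ℕ) : ZMod (5 ^ n)) := by
      push_cast
      rw [hk, pow_add, mul_comm n (4 * 5 ^ (n - 1)), pow_mul, hTone, one_pow,
        mul_one]
    exact ((ZMod.natCast_eq_natCast_iff _ _ _).mp hcc).trans hmod5
  have hmod2k : 2 ^ k ≡ D [MOD 2 ^ n] := by
    show 2 ^ k % 2 ^ n = D % 2 ^ n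
    obtain ⟨c, hc⟩ := pow_dvd_pow 2 hkn
    rw [h2, hc, Nat.mul_mod_right]
  have hcop25 : Nat.Coprime (2 ^ n) (5 ^ n) :=
    ((Nat.coprime_primes Nat.prime_two five_prime).mpr (by norm_num)).pow n n
  have hfinal : 2 ^ k ≡ D [MOD 10 ^ n] := by
    have hmm := (Nat.modEq_and_modEq_iff_modEq_mul hcop25).mp ⟨hmod2k, hmod5k⟩
    rwa [← mul_pow] at hmm
  simp only [Omega, Finset.mem_filter, Finset.mem_univ, true_and]
  exact ⟨k, hkn, hfinal.symm⟩
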